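/- Let v₁, v₂, v₃ ∈ {1,−1}⁷ be such that each vₖ has an even number of entries equal to −1 (so the corresponding diagonal matrices lie in SO(7)), and suppose the map i ↦ (v₁(i), v₂(i), v₃(i)) from {1,…,7} to {1,−1}³ is injective. Then each vₖ has exactly four entries equal to −1, and the image of this map is exactly {1,−1}³ ∖ {(1,1,1)}; consequently there is a permutation σ of {1,…,7} such that (v₁∘σ, v₂∘σ, v₃∘σ) = ((−1,−1,−1,−1,1,1,1), (−1,−1,1,1,−1,−1,1), (1,−1,−1,1,1,−1,−1)). -/

import Mathlib

/-- If `v₁, v₂, v₃ ∈ {1,−1}⁷` each have an even number of entries equal to `−1` and the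
sign-triple map `i ↦ (v₁(i), v₂(i), v₃(i))` is injective, then each `vₖ` has exactly four
entries equal to `−1`, the image of the sign-triple map is `{1,−1}³ ∖ {(1,1,1)}`, and up to a
permutation of the seven indices the triple `(v₁, v₂, v₃)` equals
`((−1,−1,−1,−1,1,1,1), (−1,−1,1,1,−1,−1,1), (1,−1,−1,1,1,−1,−1))`. -/
theorem stmt17 (v : Fin 3 → Fin 7 → ℝ)
    (hpm : ∀ k i, v k i = 1 ∨ v k i = -1)
    (heven : ∀ k, Even (Finset.univ.filter (fun i => v k i = -1)).card)
    (hinj : Function.Injective (fun i : Fin 7 => fun k : Fin 3 => v k i)) :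
    (∀ k, (Finset.univ.filter (fun i => v k i = -1)).card = 4) ∧
    (∀ w : Fin 3 → ℝ, (∀ k, w k = 1 ∨ w k = -1) → w ≠ (fun _ => 1) →
      ∃ i : Fin 7, ∀ k, v k i = w k) ∧
    (∃ σ : Equiv.Perm (Fin 7), ∀ i : Fin 7,
      v 0 (σ i) = ![-1, -1, -1, -1, 1, 1, 1] i ∧
      v 1 (σ i) = ![-1, -1, 1, 1, -1, -1, 1] i ∧
      v 2 (σ i) = ![1, -1, -1, 1, 1, -1, -1] i) := by
  classical
  set f : Fin 7 → Fin 3 → Bool := fun i k => decide (v k i = -1) with hf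
  have hfk : ∀ i k, f i k = true ↔ v k i = -1 := by
    intro i k; simp [hf]
  have hval : ∀ i k, v k i = if f i k then (-1 : ℝ) else 1 := by
    intro i k
    rcases hpm k i with h | h
    · have : f i k = false := by
        rw [← Bool.not_eq_true, hfk, h]; norm_num
      rw [this, h]; simp
    · have : f i k = true := (hfk i k).mpr h
      rw [this, h]; simp
  have hfinj : Function.Injective f := by
    intro i j hij
    apply hinj
    funext k
    simp only
    rw [hval i k, hval j k, hij]
  set T : Finset (Fin 3 → Bool) := Finset.univ.image f with hTdef
  have hcardT : T.card = 7 := by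
    rw [hTdef, Finset.card_image_of_injective _ hfinj, Finset.card_univ, Fintype.card_fin]
  have hcompl : (Finset.univ \ T).card = 1 := by
    rw [Finset.card_sdiff_of_subset (Finset.subset_univ T), hcardT, Finset.card_univ]
    decide
  obtain ⟨t, ht⟩ := Finset.card_eq_one.mp hcompl
  have hTt : ∀ g, g ∈ T ↔ g ≠ t := by
    intro g
    constructor
    · intro hg hgt
      have : t ∈ Finset.univ \ T := ht ▸ Finset.mem_singleton_self t
      rw [Finset.mem_sdiff] at this
      exact this.2 (hgt ▸ hg)
    · intro hg
      by_contra h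
      have : g ∈ Finset.univ \ T := Finset.mem_sdiff.mpr ⟨Finset.mem_univ g, h⟩
      rw [ht, Finset.mem_singleton] at this
      exact hg this
  have hTerase : T = Finset.univ.erase t := by
    ext g
    rw [hTt, Finset.mem_erase]
    simp
  have hcount : ∀ k, (Finset.univ.filter (fun i => v k i = -1)).card
      = ((Finset.univ.filter (fun g : Fin 3 → Bool => g k = true)).erase t).card := by
    intro k
    have h1 : (Finset.univ.filter (fun i => v k i = -1))
        = (Finset.univ.filter (fun i => f i k = true)) := by
      apply Finset.filter_congr
      intro i _
      simp [hfk i k]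
    rw [h1, ← Finset.card_image_of_injective _ hfinj]
    congr 1
    ext g
    constructor
    · intro hg
      rw [Finset.mem_image] at hg
      obtain ⟨i, hi, rfl⟩ := hg
      rw [Finset.mem_filter] at hi
      refine Finset.mem_erase.mpr ⟨?_, Finset.mem_filter.mpr ⟨Finset.mem_univ _, hi.2⟩⟩
      exact (hTt _).mp (hTdef ▸ Finset.mem_image_of_mem f (Finset.mem_univ i))
    · intro hg
      rw [Finset.mem_erase, Finset.mem_filter] at hg
      have hgT : g ∈ T := (hTt g).mpr hg.1
      rw [hTdef, Finset.mem_image] at hgT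
      obtain ⟨i, _, rfl⟩ := hgT
      exact Finset.mem_image_of_mem f (Finset.mem_filter.mpr ⟨Finset.mem_univ i, hg.2.2⟩)
  have hc4 : ∀ k : Fin 3, (Finset.univ.filter (fun g : Fin 3 → Bool => g k = true)).card = 4 := by
    decide
  have htk : ∀ k, t k = false := by
    intro k
    by_contra h
    have htk : t k = true := by
      cases hb : t k
      · exact absurd hb h
      · rfl
    have hmem : t ∈ Finset.univ.filter (fun g : Fin 3 → Bool => g k = true) := by
      simp [htk]
    have := heven k
    rw [hcount k, Finset.card_erase_of_mem hmem, hc4 k] at this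
    exact absurd this (by decide)
  have hteq : t = fun _ => false := funext htk
  have h4 : ∀ k, (Finset.univ.filter (fun i => v k i = -1)).card = 4 := by
    intro k
    rw [hcount k, Finset.erase_eq_of_notMem (by simp [htk k]), hc4 k]
  have hsurj : ∀ g : Fin 3 → Bool, g ≠ (fun _ => false) → ∃ i, f i = g := by
    intro g hg
    have : g ∈ T := (hTt g).mpr (by rw [hteq]; exact hg)
    rw [hTdef, Finset.mem_image] at this
    obtain ⟨i, _, hi⟩ := this
    exact ⟨i, hi⟩
  refine ⟨h4, ?_, ?_⟩
  · intro w hw hwne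
    set g : Fin 3 → Bool := fun k => decide (w k = -1) with hg
    have hgne : g ≠ (fun _ => false) := by
      intro hgf
      apply hwne
      funext k
      have : g k = false := congrFun hgf k
      rw [hg] at this
      simp only [decide_eq_false_iff_not] at this
      rcases hw k with h | h
      · exact h
      · exact absurd h this
    obtain ⟨i, hi⟩ := hsurj g hgne
    refine ⟨i, fun k => ?_⟩
    have hik : f i k = g k := congrFun hi k
    rcases hw k with h | h
    · rcases hpm k i with h' | h'
      · rw [h', h]
      · exfalso
        have : g k = true := hik ▸ (hfk i k).mpr h'
        rw [hg] at this; simp only [decide_eq_true_eq] at this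
        rw [h] at this; norm_num at this
    · rw [h, ← hfk i k, hik, hg]
      simp [h]
  · set u : Fin 7 → Fin 3 → Bool := fun i =>
      ![![true, true, true, true, false, false, false] i,
        ![true, true, false, false, true, true, false] i,
        ![false, true, true, false, false, true, true] i] with hu
    have huinj : Function.Injective u := by decide
    have hune : ∀ i, u i ≠ (fun _ => false) := by decide
    choose gmap hgmap using fun i => hsurj (u i) (hune i)
    have hginj : Function.Injective gmap := by
      intro i j hij
      apply huinj
      rw [← hgmap i, ← hgmap j, hij]
    have hgbij : Function.Bijective gmap := Finite.injective_iff_bijective.mp hginj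
    refine ⟨Equiv.ofBijective gmap hgbij, fun i => ?_⟩
    have key : ∀ k, v k (gmap i) = if u i k then (-1 : ℝ) else 1 := by
      intro k
      rw [hval (gmap i) k, hgmap i]
    have h0 := key 0
    have h1 := key 1
    have h2 := key 2
    refine ⟨?_, ?_, ?_⟩ <;>
      simp only [Equiv.ofBijective_apply] <;>
      [rw [h0]; rw [h1]; rw [h2]] <;>
      fin_cases i <;> norm_num [hu] <;> decide
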